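/- Every connected Feynman graph all of whose vertices are bivalent (|t⁻¹(v)| = 2 for every vertex v) is isomorphic either to a line graph L^k for some k ≥ 0 or to a wheel graph W^m for some m ≥ 1. -/

import Mathlib

/-- A Feynman graph: finite sets of edges `E`, half-edges `H`, vertices `V`,
with an injective attachment `s : H → E`, a target map `t : H → V`, and a
fixed-point-free involution `inv : E → E`. -/
structure FG where
  E : Type
  H : Type
  V : Type
  finE : Finite E
  finH : Finite H
  finV : Finite V
  s : H → E
  t : H → V
  inv : E → E
  s_inj : Function.Injective s
  inv_inv : ∀ e, inv (inv e) = e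
  inv_ne : ∀ e, inv e ≠ e

attribute [instance] FG.finE FG.finH FG.finV

/-- A morphism of Feynman graphs. -/
structure FGHom (G G' : FG) where
  fE : G.E → G'.E
  fH : G.H → G'.H
  fV : G.V → G'.V
  comm_inv : ∀ e, fE (G.inv e) = G'.inv (fE e)
  comm_s : ∀ h, fE (G.s h) = G'.s (fH h)
  comm_t : ∀ h, fV (G.t h) = G'.t (fH h)

/-- Composition of morphisms of Feynman graphs. -/
def FGHom.comp {G₁ G₂ G₃ : FG} (g : FGHom G₂ G₃) (f : FGHom G₁ G₂) : FGHom G₁ G₃ where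
  fE := g.fE ∘ f.fE
  fH := g.fH ∘ f.fH
  fV := g.fV ∘ f.fV
  comm_inv := fun e => by simp only [Function.comp_apply, f.comm_inv, g.comm_inv]
  comm_s := fun h => by simp only [Function.comp_apply, f.comm_s, g.comm_s]
  comm_t := fun h => by simp only [Function.comp_apply, f.comm_t, g.comm_t]

/-- A morphism is an isomorphism if all three components are bijections. -/
def FGHom.IsIso {G G' : FG} (f : FGHom G G') : Prop :=
  Function.Bijective f.fE ∧ Function.Bijective f.fH ∧ Function.Bijective f.fV

/-- A morphism is locally injective if it is injective on each fibre `t⁻¹(v)`. -/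
def FGHom.LocInj {G G' : FG} (f : FGHom G G') : Prop :=
  ∀ h₁ h₂ : G.H, G.t h₁ = G.t h₂ → f.fH h₁ = f.fH h₂ → h₁ = h₂

/-- A morphism is étale if it induces a bijection `t⁻¹(v) → t'⁻¹(f_V v)`
for every vertex `v`. -/
def FGHom.Etale {G G' : FG} (f : FGHom G G') : Prop :=
  f.LocInj ∧
  ∀ (v : G.V) (h' : G'.H), G'.t h' = f.fV v → ∃ h : G.H, G.t h = v ∧ f.fH h = h'

/-- A port is an edge not in the image of `s`. -/
def FG.IsPort (G : FG) (e : G.E) : Prop := e ∉ Set.range G.s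

/-- An inner edge: both `e` and `inv e` are in the image of `s`. -/
def FG.IsInner (G : FG) (e : G.E) : Prop :=
  e ∈ Set.range G.s ∧ G.inv e ∈ Set.range G.s

/-- Connectedness: `E ⊔ V` is nonempty and every compatible `Bool`-colouring
of edges and vertices is constant. -/
def FG.Connected (G : FG) : Prop :=
  Nonempty (G.E ⊕ G.V) ∧
  ∀ (cE : G.E → Bool) (cV : G.V → Bool),
    (∀ e, cE (G.inv e) = cE e) →
    (∀ h, cV (G.t h) = cE (G.s h)) →
    ∀ x y : G.E ⊕ G.V, Sum.elim cE cV x = Sum.elim cE cV y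

/-- The line graph `L^k` (for `k ≥ 0`): edges `l_0, …, l_{2k+1}` (here the pair
`{l_{2j}, l_{2j+1}}` is encoded as `(j, false)` and `(j, true)`), `k` vertices,
and `2k` half-edges attaching `l_{2i-1}` and `l_{2i}` to the vertex `v_i`. -/
def lineGraph (k : ℕ) : FG where
  E := Fin (k+1) × Bool
  H := Fin k × Bool
  V := Fin k
  finE := inferInstance
  finH := inferInstance
  finV := inferInstance
  s := fun p => if p.2 then (p.1.castSucc, true) else (p.1.succ, false)
  t := fun p => p.1
  inv := fun p => (p.1, !p.2)
  s_inj := by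
    rintro ⟨i, bi⟩ ⟨j, bj⟩ hij
    cases bi <;> cases bj <;> simp_all [Fin.succ_inj, Fin.castSucc_inj]
  inv_inv := by rintro ⟨i, b⟩; simp
  inv_ne := by
    rintro ⟨i, b⟩ h
    rw [Prod.mk.injEq] at h
    exact (Bool.not_ne_self b) h.2

/-- The wheel graph `W^{m+1}` (this definition, with parameter `m : ℕ`, yields
exactly the wheel graphs `W^m` for `m ≥ 1`): `m+1` vertices in `Fin (m+1)`,
the vertex `i` carrying the two edges `(i, false)` and `(i, true)` (which are
also the half-edges, via `s = id`), and the involution pairing `(i, true)`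
with `(i+1, false)` cyclically. -/
def wheelGraph (m : ℕ) : FG where
  E := Fin (m+1) × Bool
  H := Fin (m+1) × Bool
  V := Fin (m+1)
  finE := inferInstance
  finH := inferInstance
  finV := inferInstance
  s := id
  t := fun p => p.1
  inv := fun p => if p.2 then (p.1 + 1, false) else (p.1 - 1, true)
  s_inj := fun _ _ h => h
  inv_inv := by
    rintro ⟨i, b⟩
    cases b <;> simp
  inv_ne := by
    rintro ⟨i, b⟩ h
    cases b <;> simp_all
namespace BivClass

/-- Bundled "other half-edge at the same vertex" involution. -/
structure Rho (G : FG) where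
  f : G.H → G.H
  t_eq : ∀ h, G.t (f h) = G.t h
  ne : ∀ h, f h ≠ h
  invol : ∀ h, f (f h) = h
  cover : ∀ h h', G.t h' = G.t h → h' = h ∨ h' = f h

lemma card_two_other {α : Type} [Finite α] (h2 : Nat.card α = 2) (x : α) :
    ∃! y, y ≠ x := by
  classical
  have : Fintype α := Fintype.ofFinite α
  rw [Nat.card_eq_fintype_card] at h2
  have hx : (Finset.univ.erase x).card = 1 := by
    rw [Finset.card_erase_of_mem (Finset.mem_univ x), Finset.card_univ, h2]
  obtain ⟨y, hy⟩ := Finset.card_eq_one.mp hx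
  have hymem : y ∈ Finset.univ.erase x := hy ▸ Finset.mem_singleton_self y
  refine ⟨y, (Finset.mem_erase.mp hymem).1, ?_⟩
  intro z hz
  have : z ∈ Finset.univ.erase x := Finset.mem_erase.mpr ⟨hz, Finset.mem_univ z⟩
  rw [hy] at this
  exact Finset.mem_singleton.mp this

lemma rho_exists (G : FG) (hbiv : ∀ v : G.V, Nat.card {h : G.H // G.t h = v} = 2) :
    Nonempty (Rho G) := by
  have key : ∀ h : G.H, ∃! h', G.t h' = G.t h ∧ h' ≠ h := by
    intro h
    obtain ⟨y, hy, hyu⟩ := card_two_other (hbiv (G.t h)) (⟨h, rfl⟩ : {h' // G.t h' = G.t h})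
    refine ⟨y.val, ⟨y.prop, fun he => hy (Subtype.ext he)⟩, ?_⟩
    rintro z ⟨hz1, hz2⟩
    exact congrArg Subtype.val (hyu ⟨z, hz1⟩ (fun he => hz2 (congrArg Subtype.val he)))
  choose f hf hfu using key
  refine ⟨⟨f, fun h => (hf h).1, fun h => (hf h).2, ?_, ?_⟩⟩
  · intro h
    exact (hfu (f h) h ⟨((hf h).1).symm, fun he => (hf h).2 he.symm⟩).symm
  · intro h h' ht
    by_cases he : h' = h
    · exact Or.inl he
    · exact Or.inr (hfu h h' ⟨ht, he⟩)

lemma vert_half (G : FG) (hbiv : ∀ v : G.V, Nat.card {h : G.H // G.t h = v} = 2) (v : G.V) :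
    ∃ h, G.t h = v := by
  have h2 := hbiv v
  have : Nonempty {h : G.H // G.t h = v} := by
    rcases isEmpty_or_nonempty {h : G.H // G.t h = v} with he | hne
    · rw [Nat.card_of_isEmpty] at h2; omega
    · exact hne
  obtain ⟨⟨h, hh⟩⟩ := this
  exact ⟨h, hh⟩

section Chain

variable {G : FG} [Nonempty G.H] (R : Rho G)

noncomputable def half : G.E → G.H := Function.invFun G.s

lemma s_half {e : G.E} (he : e ∈ Set.range G.s) : G.s (half e) = e :=
  Function.invFun_eq he

lemma half_s (h : G.H) : half (G.s h) = h :=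
  Function.leftInverse_invFun G.s_inj h

/-- the "other flag at the same vertex" map on attached edges -/
noncomputable def sig (e : G.E) : G.E := G.s (R.f (half e))

noncomputable def stp (e : G.E) : G.E := sig R (G.inv e)

noncomputable def bck (e : G.E) : G.E := G.inv (sig R e)

lemma sig_mem (e : G.E) : sig R e ∈ Set.range G.s := ⟨_, rfl⟩

lemma stp_mem (e : G.E) : stp R e ∈ Set.range G.s := sig_mem R _

lemma sig_s (h : G.H) : sig R (G.s h) = G.s (R.f h) := by
  rw [sig, half_s]

lemma sig_sig {e : G.E} (he : e ∈ Set.range G.s) : sig R (sig R e) = e := by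
  rw [sig, sig, half_s, R.invol, s_half he]

lemma sig_ne {e : G.E} (he : e ∈ Set.range G.s) : sig R e ≠ e := by
  intro h
  exact R.ne (half e) (G.s_inj (h.trans (s_half he).symm))

lemma t_half_sig {e : G.E} : G.t (half (sig R e)) = G.t (half e) := by
  rw [sig, half_s, R.t_eq]

lemma bck_stp {e : G.E} (he : G.inv e ∈ Set.range G.s) : bck R (stp R e) = e := by
  rw [stp, bck, sig_sig R he, G.inv_inv]

lemma stp_bck {e : G.E} (he : e ∈ Set.range G.s) : stp R (bck R e) = e := by
  rw [bck, stp, G.inv_inv, sig_sig R he]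

noncomputable def ch (e0 : G.E) : ℕ → G.E := fun n => (stp R)^[n] e0

lemma ch_zero (e0 : G.E) : ch R e0 0 = e0 := rfl

lemma ch_succ (e0 : G.E) (n : ℕ) : ch R e0 (n+1) = stp R (ch R e0 n) :=
  Function.iterate_succ_apply' _ _ _

lemma ch_mem (e0 : G.E) (n : ℕ) : ch R e0 (n+1) ∈ Set.range G.s := by
  rw [ch_succ]; exact stp_mem R _

lemma sig_ch (e0 : G.E) {n : ℕ} (hn : G.inv (ch R e0 n) ∈ Set.range G.s) :
    sig R (ch R e0 (n+1)) = G.inv (ch R e0 n) := by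
  rw [ch_succ, stp, sig_sig R hn]

lemma ch_shift (e0 : G.E) (i j : ℕ) (hij : i ≤ j)
    (hAtt : ∀ n < j, G.inv (ch R e0 n) ∈ Set.range G.s)
    (h : ch R e0 i = ch R e0 j) : e0 = ch R e0 (j - i) := by
  induction i generalizing j with
  | zero => simpa [ch_zero] using h
  | succ i ih =>
    obtain ⟨j', rfl⟩ : ∃ j', j = j' + 1 := ⟨j - 1, by omega⟩
    have h' : ch R e0 i = ch R e0 j' := by
      have := congrArg (bck R) h
      rwa [ch_succ, ch_succ, bck_stp R (hAtt i (by omega)),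
        bck_stp R (hAtt j' (by omega))] at this
    rw [Nat.succ_sub_succ]
    exact ih j' (by omega) (fun n hn => hAtt n (by omega)) h'

omit [Nonempty G.H] in
/-- surjectivity-from-connectedness -/
lemma image_all (hconn : G.Connected) (S : Set G.E)
    (hinv : ∀ e ∈ S, G.inv e ∈ S)
    (hsig : ∀ h, G.s h ∈ S → G.s (R.f h) ∈ S)
    (e0 : G.E) (he0 : e0 ∈ S) : ∀ e, e ∈ S := by
  classical
  have hc1 : ∀ e, decide (G.inv e ∈ S) = decide (e ∈ S) := by
    intro e
    by_cases h : e ∈ S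
    · simp [h, hinv e h]
    · have : G.inv e ∉ S := fun hmem => h (by simpa [G.inv_inv] using hinv _ hmem)
      simp [h, this]
  have hc2 : ∀ h, decide (∃ h', G.t h' = G.t h ∧ G.s h' ∈ S) = decide (G.s h ∈ S) := by
    intro h
    apply decide_eq_decide.mpr
    constructor
    · rintro ⟨h', ht, hs⟩
      rcases R.cover h h' ht with rfl | rfl
      · exact hs
      · have := hsig _ hs
        rwa [R.invol] at this
    · intro hs
      exact ⟨h, rfl, hs⟩
  intro e
  have := hconn.2 (fun e => decide (e ∈ S)) (fun v => decide (∃ h', G.t h' = v ∧ G.s h' ∈ S))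
    hc1 (fun h => hc2 h) (Sum.inl e) (Sum.inl e0)
  simp only [Sum.elim_inl] at this
  rw [decide_eq_decide] at this
  exact this.mpr he0

end Chain

/-- Inverse of an isomorphism. -/
lemma iso_symm {A B : FG} (f : FGHom A B) (hf : f.IsIso) :
    ∃ g : FGHom B A, g.IsIso := by
  obtain ⟨hE, hH, hV⟩ := hf
  let eE := Equiv.ofBijective _ hE
  let eH := Equiv.ofBijective _ hH
  let eV := Equiv.ofBijective _ hV
  refine ⟨⟨eE.symm, eH.symm, eV.symm, ?_, ?_, ?_⟩, eE.symm.bijective, eH.symm.bijective,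
    eV.symm.bijective⟩
  · intro e
    apply eE.injective
    show f.fE _ = f.fE _
    rw [f.comm_inv]
    show f.fE (eE.symm (B.inv e)) = B.inv (f.fE (eE.symm e))
    show eE (eE.symm (B.inv e)) = B.inv (eE (eE.symm e))
    rw [Equiv.apply_symm_apply, Equiv.apply_symm_apply]
  · intro h
    apply eE.injective
    show f.fE _ = f.fE _
    rw [f.comm_s]
    show eE (eE.symm (B.s h)) = B.s (eH (eH.symm h))
    rw [Equiv.apply_symm_apply, Equiv.apply_symm_apply]
  · intro h
    apply eV.injective
    show f.fV _ = f.fV _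
    rw [f.comm_t]
    show eV (eV.symm (B.t h)) = B.t (eH (eH.symm h))
    rw [Equiv.apply_symm_apply, Equiv.apply_symm_apply]


section Line

variable {G : FG} [Nonempty G.H] (R : Rho G)

private noncomputable def lineHom (p : G.E) (k : ℕ)
    (hklt : ∀ n < k, G.inv (ch R p n) ∈ Set.range G.s) : FGHom (lineGraph k) G where
  fE := fun q => cond q.2 (G.inv (ch R p q.1.val)) (ch R p q.1.val)
  fH := fun q => cond q.2 (half (G.inv (ch R p q.1.val)))
    (R.f (half (G.inv (ch R p q.1.val))))
  fV := fun j => G.t (half (G.inv (ch R p j.val)))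
  comm_inv := by
    rintro ⟨i, b⟩
    cases b
    · show G.inv (ch R p i.val) = G.inv (ch R p i.val)
      rfl
    · show ch R p i.val = G.inv (G.inv (ch R p i.val))
      rw [G.inv_inv]
  comm_s := by
    rintro ⟨j, b⟩
    cases b
    · show ch R p (j.succ.val) = G.s (R.f (half (G.inv (ch R p j.val))))
      rw [Fin.val_succ, ch_succ]
      rfl
    · show G.inv (ch R p (j.castSucc.val)) = G.s (half (G.inv (ch R p j.val)))
      exact (s_half (hklt j.val j.isLt)).symm
  comm_t := by
    rintro ⟨j, b⟩
    cases b
    · show G.t (half (G.inv (ch R p j.val))) = G.t (R.f (half (G.inv (ch R p j.val))))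
      exact (R.t_eq _).symm
    · rfl

include R in
lemma line_case (hconn : G.Connected)
    (hbiv : ∀ v : G.V, Nat.card {h : G.H // G.t h = v} = 2)
    (p : G.E) (hp : p ∉ Set.range G.s) :
    ∃ (k : ℕ) (f : FGHom (lineGraph k) G), f.IsIso := by
  classical
  -- there is a stopping point
  have hex : ∃ n, G.inv (ch R p n) ∉ Set.range G.s := by
    by_contra hno
    push_neg at hno
    have hinj : Function.Injective (ch R p) := by
      intro i j h
      by_contra hne
      rcases Nat.lt_or_ge i j with hij | hij
      · have := ch_shift R p i j hij.le (fun n _ => hno n) h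
        obtain ⟨d, hd⟩ : ∃ d, j - i = d + 1 := ⟨j - i - 1, by omega⟩
        rw [hd] at this
        exact hp (this ▸ ch_mem R p d)
      · rcases Nat.lt_or_ge j i with hji | hji
        · have := ch_shift R p j i hji.le (fun n _ => hno n) h.symm
          obtain ⟨d, hd⟩ : ∃ d, i - j = d + 1 := ⟨i - j - 1, by omega⟩
          rw [hd] at this
          exact hp (this ▸ ch_mem R p d)
        · omega
    obtain ⟨i, j, hne, hij⟩ := Finite.exists_ne_map_eq_of_infinite (ch R p)
    exact hne (hinj hij)
  set k := Nat.find hex with hkdef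
  have hk : G.inv (ch R p k) ∉ Set.range G.s := Nat.find_spec hex
  have hklt : ∀ n < k, G.inv (ch R p n) ∈ Set.range G.s := by
    intro n hn
    by_contra hcon
    exact Nat.find_min hex hn hcon
  -- injectivity of the chain on [0, k]
  have c_inj : ∀ i ≤ k, ∀ j ≤ k, ch R p i = ch R p j → i = j := by
    have key : ∀ i j, i ≤ j → j ≤ k → ch R p i = ch R p j → i = j := by
      intro i j hij hjk h
      by_contra hne
      have := ch_shift R p i j hij (fun n hn => hklt n (by omega)) h
      obtain ⟨d, hd⟩ : ∃ d, j - i = d + 1 := ⟨j - i - 1, by omega⟩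
      rw [hd] at this
      exact hp (this ▸ ch_mem R p d)
    intro i hik j hjk h
    rcases Nat.le_total i j with hij | hij
    · exact key i j hij hjk h
    · exact (key j i hij hik h.symm).symm
  -- no flag of the chain equals the inverse of another
  have nocross_aux : ∀ d i j, i + d = j → j ≤ k → ch R p i ≠ G.inv (ch R p j) := by
    intro d
    induction d using Nat.strong_induction_on with
    | _ d IH =>
      match d with
      | 0 =>
        intro i j hij hjk h
        subst hij
        simp only [Nat.add_zero] at h
        exact G.inv_ne _ h.symm
      | 1 =>
        intro i j hij hjk h
        have hji : j = i + 1 := by omega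
        subst hji
        have h2 : G.inv (ch R p i) = ch R p (i+1) := by rw [h, G.inv_inv]
        have h3 : ch R p (i+1) = sig R (ch R p (i+1)) := by
          conv_lhs => rw [ch_succ]
          rw [stp, h2]
        exact sig_ne R (ch_mem R p i) h3.symm
      | (d+2) =>
        intro i j hij hjk h
        have hstep : ch R p (i+1) = G.inv (ch R p (j-1)) := by
          have e1 : ch R p (i+1) = sig R (ch R p j) := by
            rw [ch_succ, stp, h, G.inv_inv]
          have e2 : sig R (ch R p ((j-1)+1)) = G.inv (ch R p (j-1)) :=
            sig_ch R p (hklt (j-1) (by omega))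
          rw [e1, show j = (j-1)+1 by omega]
          exact e2
        exact IH d (by omega) (i+1) (j-1) (by omega) (by omega) hstep
  have nocross : ∀ i ≤ k, ∀ j ≤ k, ch R p i ≠ G.inv (ch R p j) := by
    intro i hik j hjk h
    rcases Nat.le_total i j with hij | hij
    · exact nocross_aux (j - i) i j (by omega) hjk h
    · have h' : ch R p j = G.inv (ch R p i) := by rw [h, G.inv_inv]
      exact nocross_aux (i - j) j i (by omega) hik h'
  -- the image set covers everything
  set S : Set G.E := {e | ∃ i ≤ k, e = ch R p i ∨ e = G.inv (ch R p i)} with hSdef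
  have hSinv : ∀ e ∈ S, G.inv e ∈ S := by
    rintro e ⟨i, hik, rfl | rfl⟩
    · exact ⟨i, hik, Or.inr rfl⟩
    · exact ⟨i, hik, Or.inl (G.inv_inv _)⟩
  have hSsig : ∀ q : G.H, G.s q ∈ S → G.s (R.f q) ∈ S := by
    rintro q ⟨i, hik, hcase | hcase⟩
    · match i, hik, hcase with
      | 0, hik, hcase => exact absurd ⟨q, hcase⟩ hp
      | (i'+1), hik, hcase =>
        have : G.s (R.f q) = sig R (ch R p (i'+1)) := by
          rw [← hcase, sig_s]
        rw [sig_ch R p (hklt i' (by omega))] at this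
        exact ⟨i', by omega, Or.inr this⟩
    · have hik' : i < k := by
        rcases Nat.lt_or_ge i k with h' | h'
        · exact h'
        · have : i = k := by omega
          subst this
          exact absurd (hcase ▸ ⟨q, rfl⟩) hk
      have : G.s (R.f q) = ch R p (i+1) := by
        rw [ch_succ, stp, ← hcase, sig_s]
      exact ⟨i+1, by omega, Or.inl this⟩
  have hall : ∀ e, e ∈ S := image_all R hconn S hSinv hSsig p ⟨0, by omega, Or.inl rfl⟩
  -- classification of half-edges
  have hhalf : ∀ q : G.H,
      (∃ i : Fin k, q = R.f (half (G.inv (ch R p i.val)))) ∨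
      (∃ i : Fin k, q = half (G.inv (ch R p i.val))) := by
    intro q
    obtain ⟨i, hik, hcase | hcase⟩ := hall (G.s q)
    · match i, hik, hcase with
      | 0, hik, hcase => exact absurd ⟨q, hcase⟩ hp
      | (i'+1), hik, hcase =>
        left
        refine ⟨⟨i', by omega⟩, ?_⟩
        apply G.s_inj
        rw [hcase, ch_succ]
        rfl
    · have hik' : i < k := by
        rcases Nat.lt_or_ge i k with h' | h'
        · exact h'
        · have : i = k := by omega
          subst this
          exact absurd (hcase ▸ ⟨q, rfl⟩) hk
      right
      refine ⟨⟨i, hik'⟩, ?_⟩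
      apply G.s_inj
      rw [hcase]
      exact (s_half (hklt i hik')).symm
  have hsfH_t : ∀ j : Fin k, G.s ((lineHom R p k hklt).fH (j, true)) = G.inv (ch R p j.val) :=
    fun j => s_half (hklt j.val j.isLt)
  have hsfH_f : ∀ j : Fin k,
      G.s ((lineHom R p k hklt).fH (j, false)) = ch R p (j.val + 1) := by
    intro j
    show G.s (R.f (half (G.inv (ch R p j.val)))) = ch R p (j.val + 1)
    rw [← sig_s, s_half (hklt j.val j.isLt), ch_succ]
    rfl
  refine ⟨k, lineHom R p k hklt, ?_, ?_, ?_⟩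
  · -- fE bijective
    constructor
    · rintro ⟨i, bi⟩ ⟨i', bi'⟩ h
      have hik : i.val ≤ k := by omega
      have hik' : i'.val ≤ k := by omega
      cases bi <;> cases bi' <;>
        simp only [lineHom, Bool.cond_false, Bool.cond_true] at h
      · have := c_inj _ hik _ hik' h
        exact congrArg (fun x => (x, false)) (Fin.ext this)
      · exact absurd h (nocross i.val hik i'.val hik')
      · exact absurd (by rw [h] : ch R p i'.val = G.inv (ch R p i.val))
          (nocross i'.val hik' i.val hik)
      · have h2 : ch R p i.val = ch R p i'.val := by
          rw [← G.inv_inv (ch R p i.val), h, G.inv_inv]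
        have := c_inj _ hik _ hik' h2
        exact congrArg (fun x => (x, true)) (Fin.ext this)
    · rintro e
      obtain ⟨i, hik, hcase | hcase⟩ := hall e
      · exact ⟨(⟨i, by omega⟩, false), hcase.symm⟩
      · exact ⟨(⟨i, by omega⟩, true), hcase.symm⟩
  · -- fH bijective
    constructor
    · rintro ⟨j, bj⟩ ⟨j', bj'⟩ h
      have h2 := congrArg G.s h
      cases bj <;> cases bj'
      · rw [hsfH_f, hsfH_f] at h2
        have := c_inj _ (by omega) _ (by omega) h2
        exact congrArg (fun x => (x, false)) (Fin.ext (by omega))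
      · rw [hsfH_f, hsfH_t] at h2
        exact absurd h2 (nocross (j.val+1) (by omega) j'.val (by omega))
      · rw [hsfH_t, hsfH_f] at h2
        exact absurd h2.symm (nocross (j'.val+1) (by omega) j.val (by omega))
      · rw [hsfH_t, hsfH_t] at h2
        have h3 : ch R p j.val = ch R p j'.val := by
          rw [← G.inv_inv (ch R p j.val), h2, G.inv_inv]
        exact congrArg (fun x => (x, true)) (Fin.ext (c_inj _ (by omega) _ (by omega) h3))
    · intro q
      rcases hhalf q with ⟨i, hi⟩ | ⟨i, hi⟩
      · exact ⟨(i, false), hi.symm⟩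
      · exact ⟨(i, true), hi.symm⟩
  · -- fV bijective
    constructor
    · intro j j' h
      simp only [lineHom] at h
      rcases R.cover (half (G.inv (ch R p j'.val))) (half (G.inv (ch R p j.val))) h with hc | hc
      · have h2 := congrArg G.s hc
        rw [s_half (hklt j.val j.isLt), s_half (hklt j'.val j'.isLt)] at h2
        have h3 : ch R p j.val = ch R p j'.val := by
          rw [← G.inv_inv (ch R p j.val), h2, G.inv_inv]
        exact Fin.ext (c_inj _ (by omega) _ (by omega) h3)
      · have h2 := congrArg G.s hc
        rw [s_half (hklt j.val j.isLt), ← sig_s, s_half (hklt j'.val j'.isLt)] at h2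
        have h3 : G.inv (ch R p j.val) = ch R p (j'.val + 1) := by
          rw [h2, ch_succ]
          rfl
        exact absurd h3.symm (nocross (j'.val+1) (by omega) j.val (by omega))
    · intro v
      obtain ⟨q, hq⟩ := vert_half G hbiv v
      rcases hhalf q with ⟨i, hi⟩ | ⟨i, hi⟩
      · refine ⟨i, ?_⟩
        show G.t (half (G.inv (ch R p i.val))) = v
        rw [← hq, hi, R.t_eq]
      · refine ⟨i, ?_⟩
        show G.t (half (G.inv (ch R p i.val))) = v
        rw [← hq, hi]

end Line


section Wheel

variable {G : FG} [Nonempty G.H] (R : Rho G)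

lemma half_double (M : ℕ) [NeZero M] (j : ZMod M) :
    ∃ y : ZMod M, 2 * y = j ∨ 2 * y = j + 1 := by
  rcases Nat.even_or_odd j.val with he | ho
  · refine ⟨((j.val / 2 : ℕ) : ZMod M), Or.inl ?_⟩
    have h2 : 2 * (j.val / 2) = j.val := by obtain ⟨r, hr⟩ := he; omega
    calc (2 : ZMod M) * ((j.val / 2 : ℕ) : ZMod M)
        = ((2 * (j.val / 2) : ℕ) : ZMod M) := by push_cast; ring
      _ = ((j.val : ℕ) : ZMod M) := by rw [h2]
      _ = j := ZMod.natCast_rightInverse j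
  · refine ⟨(((j.val + 1) / 2 : ℕ) : ZMod M), Or.inr ?_⟩
    have h2 : 2 * ((j.val + 1) / 2) = j.val + 1 := by obtain ⟨r, hr⟩ := ho; omega
    calc (2 : ZMod M) * (((j.val + 1) / 2 : ℕ) : ZMod M)
        = ((2 * ((j.val + 1) / 2) : ℕ) : ZMod M) := by push_cast; ring
      _ = ((j.val + 1 : ℕ) : ZMod M) := by rw [h2]
      _ = j + 1 := by push_cast; rw [ZMod.natCast_rightInverse j]

def iotaF (m : ℕ) : Fin (m+1) → ZMod (m+1) := fun i => (i.val : ZMod (m+1))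

lemma iotaF_val (m : ℕ) (i : Fin (m+1)) : (iotaF m i).val = i.val :=
  ZMod.val_cast_of_lt i.isLt

lemma iotaF_inj (m : ℕ) : Function.Injective (iotaF m) := by
  intro i j h
  exact Fin.ext (by rw [← iotaF_val m i, ← iotaF_val m j, h])

lemma iotaF_surj (m : ℕ) (z : ZMod (m+1)) : ∃ i, iotaF m i = z :=
  ⟨⟨z.val, ZMod.val_lt z⟩, ZMod.natCast_rightInverse z⟩

lemma iotaF_add_one (m : ℕ) (i : Fin (m+1)) : iotaF m (i + 1) = iotaF m i + 1 := by
  show (((i + 1 : Fin (m+1)).val : ℕ) : ZMod (m+1)) = _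
  rw [Fin.val_add, ZMod.natCast_mod]
  push_cast
  rw [Fin.val_one', ZMod.natCast_mod, Nat.cast_one]
  rfl

lemma iotaF_sub_one (m : ℕ) (i : Fin (m+1)) : iotaF m (i - 1) = iotaF m i - 1 := by
  have h := iotaF_add_one m (i - 1)
  rw [sub_add_cancel] at h
  rw [h]
  ring

private noncomputable def wheelHom (m : ℕ) (C : ZMod (m+1) → G.E)
    (hall : ∀ e : G.E, e ∈ Set.range G.s)
    (hCsig : ∀ z, sig R (C z) = G.inv (C (z - 1))) : FGHom (wheelGraph m) G where
  fE := fun q => cond q.2 (C (iotaF m q.1)) (G.inv (C (iotaF m q.1 - 1)))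
  fH := fun q => cond q.2 (half (C (iotaF m q.1))) (R.f (half (C (iotaF m q.1))))
  fV := fun i => G.t (half (C (iotaF m i)))
  comm_inv := by
    rintro ⟨i, b⟩
    cases b
    · show C (iotaF m (i - 1)) = G.inv (G.inv (C (iotaF m i - 1)))
      rw [G.inv_inv, iotaF_sub_one]
    · show G.inv (C (iotaF m (i + 1) - 1)) = G.inv (C (iotaF m i))
      rw [iotaF_add_one, add_sub_cancel_right]
  comm_s := by
    rintro ⟨i, b⟩
    cases b
    · show G.inv (C (iotaF m i - 1)) = G.s (R.f (half (C (iotaF m i))))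
      rw [← sig_s, s_half (hall _), hCsig]
    · show C (iotaF m i) = G.s (half (C (iotaF m i)))
      exact (s_half (hall _)).symm
  comm_t := by
    rintro ⟨i, b⟩
    cases b
    · show G.t (half (C (iotaF m i))) = G.t (R.f (half (C (iotaF m i))))
      exact (R.t_eq _).symm
    · rfl

include R in
lemma wheel_case (hconn : G.Connected)
    (hbiv : ∀ v : G.V, Nat.card {h : G.H // G.t h = v} = 2)
    (hall : ∀ e : G.E, e ∈ Set.range G.s) :
    ∃ (m : ℕ) (f : FGHom (wheelGraph m) G), f.IsIso := by
  classical
  obtain ⟨h0⟩ := ‹Nonempty G.H›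
  set e0 := G.s h0 with he0
  have hinvinj : Function.Injective G.inv := by
    intro a b hab
    rw [← G.inv_inv a, hab, G.inv_inv]
  have hstpbij : Function.Bijective (stp R) :=
    Function.bijective_iff_has_inverse.mpr
      ⟨bck R, fun e => bck_stp R (hall _), fun e => stp_bck R (hall _)⟩
  have hper : ∃ n, 0 < n ∧ ch R e0 n = e0 := by
    obtain ⟨i, j, hne, hij⟩ := Finite.exists_ne_map_eq_of_infinite (ch R e0)
    rcases Nat.lt_or_ge i j with hij' | hij'
    · exact ⟨j - i, by omega, (ch_shift R e0 i j hij'.le (fun n _ => hall _) hij).symm⟩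
    · have hji : j < i := by
        rcases Nat.lt_or_ge j i with h' | h'
        · exact h'
        · exact absurd (Nat.le_antisymm hij' h').symm hne
      exact ⟨i - j, by omega, (ch_shift R e0 j i hji.le (fun n _ => hall _) hij.symm).symm⟩
  obtain ⟨M, ⟨hM0, hMe⟩, hMmin⟩ :
      ∃ M, (0 < M ∧ ch R e0 M = e0) ∧ ∀ n < M, ¬(0 < n ∧ ch R e0 n = e0) :=
    ⟨Nat.find hper, Nat.find_spec hper, fun n h => Nat.find_min hper h⟩
  obtain ⟨m, rfl⟩ : ∃ m, M = m + 1 := ⟨M - 1, by omega⟩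
  set M := m + 1 with hMdef
  have : NeZero M := ⟨by omega⟩
  -- periodicity
  have ch_add : ∀ n, ch R e0 (n + M) = ch R e0 n := by
    intro n
    show (stp R)^[n + M] e0 = _
    rw [Function.iterate_add_apply]
    exact congrArg _ hMe
  have ch_mod : ∀ n, ch R e0 n = ch R e0 (n % M) := by
    intro n
    conv_lhs => rw [← Nat.mod_add_div n M]
    generalize n / M = q
    induction q with
    | zero => rfl
    | succ q ih =>
      rw [show n % M + M * (q + 1) = (n % M + M * q) + M by ring, ch_add]
      exact ih
  have ch_inj : ∀ i < M, ∀ j < M, ch R e0 i = ch R e0 j → i = j := by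
    have key : ∀ i j, i ≤ j → j < M → ch R e0 i = ch R e0 j → i = j := by
      intro i j hij hjM h
      by_contra hne
      have := ch_shift R e0 i j hij (fun n _ => hall _) h
      exact hMmin (j - i) (by omega) ⟨by omega, this.symm⟩
    intro i hiM j hjM h
    rcases Nat.le_total i j with hij | hij
    · exact key i j hij hjM h
    · exact (key j i hij hiM h.symm).symm
  -- the cyclic parametrisation
  set C : ZMod M → G.E := fun z => ch R e0 z.val with hCdef
  have hCcast : ∀ n : ℕ, C (n : ZMod M) = ch R e0 n := by
    intro n
    show ch R e0 ((n : ZMod M)).val = _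
    rw [ZMod.val_natCast, ← ch_mod]
  have hC0 : C 0 = e0 := by
    have := hCcast 0
    rwa [Nat.cast_zero] at this
  have hCinj : Function.Injective C := by
    intro z w h
    exact ZMod.val_injective M (ch_inj _ (ZMod.val_lt z) _ (ZMod.val_lt w) h)
  have hCsucc : ∀ z, C (z + 1) = stp R (C z) := by
    intro z
    have hz : ((z.val + 1 : ℕ) : ZMod M) = z + 1 := by
      push_cast
      rw [ZMod.natCast_rightInverse z]
    rw [← hz, hCcast, ch_succ]
  have hCsig : ∀ z, sig R (C z) = G.inv (C (z - 1)) := by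
    intro z
    have h1 := hCsucc (z - 1)
    rw [sub_add_cancel] at h1
    rw [h1, stp, sig_sig R (hall _)]
  -- no chain flag is the inverse of another
  have nocross : ∀ z w, C z ≠ G.inv (C w) := by
    intro z w h
    have hbase : G.inv (C w) = C z := h.symm
    have hrec : ∀ n : ℕ, G.inv (C (w + n)) = C (z - n) := by
      intro n
      induction n with
      | zero => simpa using hbase
      | succ n ih =>
        have h1 : stp R (G.inv (C (w + (n + 1 : ℕ)))) = G.inv (C (w + n)) := by
          have h2 := hCsig (w + (n + 1 : ℕ))
          rw [show (w + (n + 1 : ℕ) : ZMod M) - 1 = w + (n : ℕ) by push_cast; ring] at h2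
          rw [stp, G.inv_inv]
          exact h2
        have h3 : stp R (C (z - (n : ℕ) - 1)) = C (z - n) := by
          have := hCsucc (z - (n : ℕ) - 1)
          rw [sub_add_cancel] at this
          exact this.symm
        have h4 := hstpbij.1 (h1.trans (ih.trans h3.symm))
        rw [show (z : ZMod M) - ((n + 1 : ℕ) : ZMod M) = z - (n : ℕ) - 1 by push_cast; ring]
        exact h4
    have hally : ∀ y, G.inv (C y) = C (z + w - y) := by
      intro y
      have h1 := hrec (y - w).val
      rw [ZMod.natCast_rightInverse (y - w)] at h1
      rw [show w + (y - w) = y by ring, show z - (y - w) = z + w - y by ring] at h1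
      exact h1
    obtain ⟨y, hy | hy⟩ := half_double M (z + w)
    · have h1 := hally y
      rw [show z + w - y = y by rw [← hy]; ring] at h1
      exact G.inv_ne (C y) h1
    · have h1 := hCsig y
      rw [hally (y - 1), show z + w - (y - 1) = y by linear_combination -hy] at h1
      exact sig_ne R (hall _) h1
  -- the image set covers everything
  set S : Set G.E := {e | ∃ z, e = C z ∨ e = G.inv (C z)} with hSdef
  have hSinv : ∀ e ∈ S, G.inv e ∈ S := by
    rintro e ⟨z, rfl | rfl⟩
    · exact ⟨z, Or.inr rfl⟩
    · exact ⟨z, Or.inl (G.inv_inv _)⟩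
  have hSsig : ∀ q : G.H, G.s q ∈ S → G.s (R.f q) ∈ S := by
    rintro q ⟨z, hc | hc⟩
    · have : G.s (R.f q) = G.inv (C (z - 1)) := by
        rw [← sig_s, hc, hCsig]
      exact ⟨z - 1, Or.inr this⟩
    · have h1 : G.s q = sig R (C (z + 1)) := by
        rw [hCsig (z + 1), add_sub_cancel_right, hc]
      have : G.s (R.f q) = C (z + 1) := by
        rw [← sig_s, h1, sig_sig R (hall _)]
      exact ⟨z + 1, Or.inl this⟩
  have hallS : ∀ e, e ∈ S := image_all R hconn S hSinv hSsig e0 ⟨0, Or.inl hC0.symm⟩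
  -- classification of half-edges
  have hhalf : ∀ q : G.H, (∃ z, q = half (C z)) ∨ (∃ z, q = R.f (half (C z))) := by
    intro q
    obtain ⟨z, hc | hc⟩ := hallS (G.s q)
    · left
      exact ⟨z, by rw [← hc, half_s]⟩
    · right
      refine ⟨z + 1, ?_⟩
      apply G.s_inj
      rw [hc, ← sig_s, s_half (hall _), hCsig (z + 1), add_sub_cancel_right]
  have hsfH_t : ∀ i : Fin (m+1),
      G.s ((wheelHom R m C hall hCsig).fH (i, true)) = C (iotaF m i) :=
    fun i => s_half (hall _)
  have hsfH_f : ∀ i : Fin (m+1),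
      G.s ((wheelHom R m C hall hCsig).fH (i, false)) = G.inv (C (iotaF m i - 1)) := by
    intro i
    show G.s (R.f (half (C (iotaF m i)))) = _
    rw [← sig_s, s_half (hall _), hCsig]
  refine ⟨m, wheelHom R m C hall hCsig, ?_, ?_, ?_⟩
  · -- fE bijective
    constructor
    · rintro ⟨i, bi⟩ ⟨i', bi'⟩ h
      cases bi <;> cases bi' <;>
        simp only [wheelHom, Bool.cond_false, Bool.cond_true] at h
      · have := hCinj (hinvinj h)
        have h2 : iotaF m i = iotaF m i' := by
          have := sub_left_inj.mp this
          exact this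
        exact congrArg (fun x => (x, false)) (iotaF_inj m h2)
      · exact absurd h.symm (nocross _ _)
      · exact absurd h (nocross _ _)
      · exact congrArg (fun x => (x, true)) (iotaF_inj m (hCinj h))
    · rintro e
      obtain ⟨z, hc | hc⟩ := hallS e
      · obtain ⟨i, hi⟩ := iotaF_surj m z
        refine ⟨(i, true), ?_⟩
        show C (iotaF m i) = e
        rw [hi, hc]
      · obtain ⟨i, hi⟩ := iotaF_surj m (z + 1)
        refine ⟨(i, false), ?_⟩
        show G.inv (C (iotaF m i - 1)) = e
        rw [hi, add_sub_cancel_right, hc]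
  · -- fH bijective
    constructor
    · rintro ⟨i, bi⟩ ⟨i', bi'⟩ h
      have h2 := congrArg G.s h
      cases bi <;> cases bi'
      · rw [hsfH_f, hsfH_f] at h2
        have h3 := sub_left_inj.mp (hCinj (hinvinj h2))
        exact congrArg (fun x => (x, false)) (iotaF_inj m h3)
      · rw [hsfH_f, hsfH_t] at h2
        exact absurd h2.symm (nocross _ _)
      · rw [hsfH_t, hsfH_f] at h2
        exact absurd h2 (nocross _ _)
      · rw [hsfH_t, hsfH_t] at h2
        exact congrArg (fun x => (x, true)) (iotaF_inj m (hCinj h2))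
    · intro q
      rcases hhalf q with ⟨z, hz⟩ | ⟨z, hz⟩
      · obtain ⟨i, hi⟩ := iotaF_surj m z
        refine ⟨(i, true), ?_⟩
        show half (C (iotaF m i)) = q
        rw [hi, hz]
      · obtain ⟨i, hi⟩ := iotaF_surj m z
        refine ⟨(i, false), ?_⟩
        show R.f (half (C (iotaF m i))) = q
        rw [hi, hz]
  · -- fV bijective
    constructor
    · intro j j' h
      simp only [wheelHom] at h
      rcases R.cover (half (C (iotaF m j'))) (half (C (iotaF m j))) h with hc | hc
      · have h2 := congrArg G.s hc
        rw [s_half (hall _), s_half (hall _)] at h2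
        exact iotaF_inj m (hCinj h2)
      · have h2 := congrArg G.s hc
        rw [s_half (hall _), ← sig_s, s_half (hall _), hCsig] at h2
        exact absurd h2 (nocross _ _)
    · intro v
      obtain ⟨q, hq⟩ := vert_half G hbiv v
      rcases hhalf q with ⟨z, hz⟩ | ⟨z, hz⟩
      · obtain ⟨i, hi⟩ := iotaF_surj m z
        refine ⟨i, ?_⟩
        show G.t (half (C (iotaF m i))) = v
        rw [hi, ← hz, hq]
      · obtain ⟨i, hi⟩ := iotaF_surj m z
        refine ⟨i, ?_⟩
        show G.t (half (C (iotaF m i))) = v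
        rw [hi, ← hq, hz, R.t_eq]

end Wheel

end BivClass

/-- Every connected Feynman graph all of whose vertices are bivalent is
isomorphic to a line graph `L^k` (`k ≥ 0`) or a wheel graph `W^m` (`m ≥ 1`,
here `wheelGraph m = W^{m+1}`). -/
theorem bivalent_classification (G : FG) (hconn : G.Connected)
    (hbiv : ∀ v : G.V, Nat.card {h : G.H // G.t h = v} = 2) :
    (∃ (k : ℕ) (f : FGHom G (lineGraph k)), f.IsIso) ∨
    (∃ (m : ℕ) (f : FGHom G (wheelGraph m)), f.IsIso) := by
  classical
  rcases isEmpty_or_nonempty G.H with hH | hH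
  · -- the stick graph: no half-edges at all
    left
    have hV : IsEmpty G.V := by
      constructor
      intro v
      have h2 := hbiv v
      have : IsEmpty {h : G.H // G.t h = v} := ⟨fun x => hH.false x.val⟩
      rw [Nat.card_of_isEmpty] at h2
      omega
    have hE : Nonempty G.E := by
      obtain ⟨x⟩ := hconn.1
      rcases x with e | v
      · exact ⟨e⟩
      · exact hV.elim v
    obtain ⟨e0⟩ := hE
    have hne : e0 ≠ G.inv e0 := fun h => G.inv_ne e0 h.symm
    have hall : ∀ e, e = e0 ∨ e = G.inv e0 := by
      intro e
      have key := hconn.2 (fun e => decide (e = e0 ∨ e = G.inv e0)) (fun _ => true) ?_ ?_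
        (Sum.inl e) (Sum.inl e0)
      · simp only [Sum.elim_inl, decide_eq_decide] at key
        exact key.mpr (Or.inl trivial)
      · intro e'
        apply decide_eq_decide.mpr
        constructor
        · rintro (h | h)
          · right
            rw [← h, G.inv_inv]
          · left
            rw [← G.inv_inv e', h, G.inv_inv]
        · rintro (h | h)
          · right
            rw [h]
          · left
            rw [h, G.inv_inv]
      · intro h
        exact (hH.false h).elim
    refine ⟨0, ⟨fun e => ((0 : Fin 1), decide (e = G.inv e0)),
      fun h => (hH.false h).elim, fun v => (hV.false v).elim, ?_, ?_, ?_⟩, ?_, ?_, ?_⟩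
    · intro e
      show ((0 : Fin 1), decide (G.inv e = G.inv e0)) = ((0 : Fin 1), !decide (e = G.inv e0))
      rcases hall e with rfl | rfl
      · simp [hne]
      · simp [G.inv_inv, hne]
    · intro h
      exact (hH.false h).elim
    · intro h
      exact (hH.false h).elim
    · constructor
      · intro e e' h
        have h2 : (e = G.inv e0) ↔ (e' = G.inv e0) := by
          have h3 := congrArg Prod.snd h
          simpa using h3
        rcases hall e with rfl | rfl <;> rcases hall e' with rfl | rfl
        · rfl
        · exact absurd (h2.mpr rfl) hne
        · exact absurd (h2.mp rfl) hne
        · rfl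
      · rintro ⟨i, b⟩
        have hi : i = 0 := Fin.ext (by omega)
        subst hi
        cases b
        · exact ⟨e0, by simp [hne]; rfl⟩
        · exact ⟨G.inv e0, by simp; rfl⟩
    · constructor
      · intro h
        exact (hH.false h).elim
      · rintro ⟨i, b⟩
        exact i.elim0
    · constructor
      · intro v
        exact (hV.false v).elim
      · intro i
        exact i.elim0
  · obtain ⟨R⟩ := BivClass.rho_exists G hbiv
    by_cases hport : ∀ e, e ∈ Set.range G.s
    · obtain ⟨m, f, hf⟩ := BivClass.wheel_case R hconn hbiv hport
      obtain ⟨g, hg⟩ := BivClass.iso_symm f hf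
      exact Or.inr ⟨m, g, hg⟩
    · push_neg at hport
      obtain ⟨p, hp⟩ := hport
      obtain ⟨k, f, hf⟩ := BivClass.line_case R hconn hbiv p hp
      obtain ⟨g, hg⟩ := BivClass.iso_symm f hf
      exact Or.inl ⟨k, g, hg⟩
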